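/- Let N be a positive integer, let c ∈ EuclideanSpace ℂ (Fin N) be a unit vector with coordinates c_j, and let g : ℂ → ℝ satisfy −1 ≤ g(z) ≤ 1 for all z. Then the vector (1/√N) · Σ_j e_j ⊗ (g(c_j) · f_0 + √(1 − g(c_j)²) · f_1) in (EuclideanSpace ℂ (Fin N)) ⊗ ℂ² is a unit vector, the squared norm of its f_0-ancilla component equals (1/N) · Σ_j g(c_j)², and if Σ_j g(c_j)² > 0 the normalized f_0-component equals (Σ_j g(c_j)²)^{−1/2} · Σ_j g(c_j) · e_j ⊗ f_0. (This is the success probability and the nonlinearly transformed output state C'·Σ_j f(c_j)|j⟩ of Theorem 5 on nonlinear transformation of amplitudes.) -/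

import Mathlib

open scoped BigOperators

noncomputable section

/-- Concrete realization of the Hilbert-space tensor product of two Euclidean spaces:
`(tp x y) (i, k) = x i * y k`.  The `L²` inner product on `EuclideanSpace ℂ (ι × κ)` is
exactly the induced inner product `⟪a ⊗ b, c ⊗ d⟫ = ⟪a, c⟫ * ⟪b, d⟫`. -/
def tp {ι κ : Type*} [Fintype ι] [Fintype κ]
    (x : EuclideanSpace ℂ ι) (y : EuclideanSpace ℂ κ) : EuclideanSpace ℂ (ι × κ) :=
  (WithLp.equiv 2 ((ι × κ) → ℂ)).symm fun p => x p.1 * y p.2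

/-- The standard orthonormal basis vector `e_j` of `EuclideanSpace ℂ (Fin N)`. -/
def e {N : ℕ} (j : Fin N) : EuclideanSpace ℂ (Fin N) := EuclideanSpace.single j 1

/-- The standard orthonormal basis vector `f_b` of `ℂ² = EuclideanSpace ℂ (Fin 2)`. -/
def f (b : Fin 2) : EuclideanSpace ℂ (Fin 2) := EuclideanSpace.single b 1

lemma sum_apply' {ι κ : Type*} (s : Finset ι) (v : ι → EuclideanSpace ℂ κ) (p : κ) :
    (∑ j ∈ s, v j) p = ∑ j ∈ s, v j p :=
  map_sum (PiLp.projₗ (𝕜 := ℂ) 2 (fun _ : κ => ℂ) p) v s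

lemma normsq {N : ℕ} (A : Fin N → Fin 2 → ℂ) :
    ‖∑ j : Fin N, ∑ b : Fin 2, A j b • (EuclideanSpace.single (j, b) (1:ℂ) : EuclideanSpace ℂ (Fin N × Fin 2))‖^2
      = ∑ j : Fin N, ∑ b : Fin 2, ‖A j b‖^2 := by
  rw [EuclideanSpace.norm_eq, Real.sq_sqrt (Finset.sum_nonneg fun _ _ => sq_nonneg _)]
  rw [Fintype.sum_prod_type]
  refine Finset.sum_congr rfl fun i _ => Finset.sum_congr rfl fun k _ => ?_
  congr 1
  have : (∑ j : Fin N, ∑ b : Fin 2, A j b • (EuclideanSpace.single (j, b) (1:ℂ) : EuclideanSpace ℂ (Fin N × Fin 2))) (i,k)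
      = ∑ j : Fin N, ∑ b : Fin 2, A j b * (if (i,k) = (j,b) then 1 else 0) := by
    rw [sum_apply']
    refine Finset.sum_congr rfl fun j _ => ?_
    rw [sum_apply']
    refine Finset.sum_congr rfl fun b _ => ?_
    simp [EuclideanSpace.single_apply, eq_comm]
  rw [this]
  congr 1
  simp [Prod.ext_iff, mul_ite, ← Finset.sum_add_distrib, Finset.sum_ite_eq, Fin.sum_univ_two]
  fin_cases k <;> simp

lemma tpf {N : ℕ} (j : Fin N) (b : Fin 2) :
    tp (e j) (f b) = EuclideanSpace.single (j, b) (1:ℂ) := by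
  ext ⟨i, k⟩
  simp [tp, e, f, EuclideanSpace.single_apply, Prod.ext_iff]
  aesop

lemma tp_comb {N : ℕ} (j : Fin N) (a b : ℂ) :
    tp (e j) (a • f 0 + b • f 1)
      = ∑ k : Fin 2, (if k = 0 then a else b) • (EuclideanSpace.single (j, k) (1:ℂ) : EuclideanSpace ℂ (Fin N × Fin 2)) := by
  ext ⟨i, k⟩
  rw [sum_apply']
  simp [tp, e, f, EuclideanSpace.single_apply, Prod.ext_iff, Fin.sum_univ_two, mul_add]
  fin_cases k <;> aesop

/-- **Nonlinear transformation of amplitudes (Theorem 5).**  For a unit vector `c` with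
coordinates `c_j` and any `g : ℂ → ℝ` with `-1 ≤ g(z) ≤ 1`, the state
`(1/√N) Σ_j e_j ⊗ (g(c_j) f₀ + √(1 - g(c_j)²) f₁)` is a unit vector, the squared norm of
its `f₀`-ancilla component equals `(1/N) Σ_j g(c_j)²`, and whenever `Σ_j g(c_j)² > 0` the
normalized `f₀`-component equals `(Σ_j g(c_j)²)^(-1/2) Σ_j g(c_j) e_j ⊗ f₀`. -/
theorem nonlinear_amplitude_transformation (N : ℕ) (hN : 0 < N)
    (c : EuclideanSpace ℂ (Fin N)) (hc : ‖c‖ = 1) (g : ℂ → ℝ)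
    (hg : ∀ z : ℂ, -1 ≤ g z ∧ g z ≤ 1) :
    ‖((1 / Real.sqrt N : ℝ) : ℂ) • ∑ j : Fin N,
        tp (e j) ((g (c j) : ℂ) • f 0 + ((Real.sqrt (1 - g (c j) ^ 2) : ℝ) : ℂ) • f 1)‖ = 1 ∧
    ‖((1 / Real.sqrt N : ℝ) : ℂ) • ∑ j : Fin N, (g (c j) : ℂ) • tp (e j) (f 0)‖ ^ 2
      = (1 / N) * ∑ j : Fin N, g (c j) ^ 2 ∧
    (0 < ∑ j : Fin N, g (c j) ^ 2 →
      ‖((1 / Real.sqrt N : ℝ) : ℂ) • ∑ j : Fin N, (g (c j) : ℂ) • tp (e j) (f 0)‖⁻¹ •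
          (((1 / Real.sqrt N : ℝ) : ℂ) • ∑ j : Fin N, (g (c j) : ℂ) • tp (e j) (f 0))
        = (((∑ j : Fin N, g (c j) ^ 2) ^ (-(1 / 2) : ℝ) : ℝ) : ℂ) •
            ∑ j : Fin N, (g (c j) : ℂ) • tp (e j) (f 0)) := by
  have hNR : (0:ℝ) < N := by exact_mod_cast hN
  have hsqN : (0:ℝ) < Real.sqrt N := Real.sqrt_pos.mpr hNR
  have hg2 : ∀ j : Fin N, (0:ℝ) ≤ 1 - g (c j) ^ 2 := by
    intro j
    have h := hg (c j)
    nlinarith [h.1, h.2]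
  -- norm of v₁
  have hv1 : ‖∑ j : Fin N,
      tp (e j) ((g (c j) : ℂ) • f 0 + ((Real.sqrt (1 - g (c j) ^ 2) : ℝ) : ℂ) • f 1)‖^2 = N := by
    have := normsq (N := N) (fun j k => if k = 0 then (g (c j) : ℂ) else ((Real.sqrt (1 - g (c j) ^ 2) : ℝ) : ℂ))
    simp only [← tp_comb] at this
    rw [this]
    have h1 : ∀ j : Fin N, ∑ b : Fin 2,
        ‖if b = 0 then ((g (c j)):ℂ) else ((Real.sqrt (1 - g (c j) ^ 2) : ℝ) : ℂ)‖ ^ 2 = 1 := by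
      intro j
      rw [Fin.sum_univ_two]
      norm_num [Complex.norm_real, sq_abs, Real.sq_sqrt (hg2 j)]
    rw [Finset.sum_congr rfl fun j _ => h1 j]
    simp
  -- norm of v₀
  have hv0 : ‖∑ j : Fin N, (g (c j) : ℂ) • tp (e j) (f 0)‖^2 = ∑ j : Fin N, g (c j) ^ 2 := by
    have hrw : ∀ j : Fin N, (g (c j) : ℂ) • tp (e j) (f 0)
        = ∑ k : Fin 2, (if k = 0 then (g (c j):ℂ) else 0) • (EuclideanSpace.single (j, k) (1:ℂ) : EuclideanSpace ℂ (Fin N × Fin 2)) := by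
      intro j
      rw [Fin.sum_univ_two]
      simp [tpf]
    simp only [hrw]
    rw [normsq]
    refine Finset.sum_congr rfl fun j _ => ?_
    rw [Fin.sum_univ_two]
    simp [Complex.norm_real, sq_abs]
  refine ⟨?_, ?_, ?_⟩
  · rw [norm_smul]
    have : ‖∑ j : Fin N,
        tp (e j) ((g (c j) : ℂ) • f 0 + ((Real.sqrt (1 - g (c j) ^ 2) : ℝ) : ℂ) • f 1)‖ = Real.sqrt N := by
      have hnn : (0:ℝ) ≤ ‖∑ j : Fin N,
          tp (e j) ((g (c j) : ℂ) • f 0 + ((Real.sqrt (1 - g (c j) ^ 2) : ℝ) : ℂ) • f 1)‖ := norm_nonneg _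
      nlinarith [Real.sq_sqrt hNR.le, Real.sqrt_nonneg (N:ℝ)]
    rw [this, Complex.norm_real, Real.norm_eq_abs, abs_of_pos (by positivity)]
    field_simp
  · rw [norm_smul, mul_pow, hv0, Complex.norm_real, Real.norm_eq_abs, sq_abs,
      div_pow, one_pow, Real.sq_sqrt hNR.le]
  · intro hS
    set S := ∑ j : Fin N, g (c j) ^ 2 with hSdef
    set v := ∑ j : Fin N, (g (c j) : ℂ) • tp (e j) (f 0) with hv
    have hnorm : ‖((1 / Real.sqrt N : ℝ) : ℂ) • v‖ = Real.sqrt S / Real.sqrt N := by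
      rw [norm_smul, Complex.norm_real, Real.norm_eq_abs, abs_of_pos (by positivity)]
      have : ‖v‖ = Real.sqrt S := by
        rw [← Real.sqrt_sq (norm_nonneg v), hv0]
      rw [this]
      ring
    rw [hnorm, ← Complex.coe_smul, smul_smul]
    congr 1
    have hsS : (0:ℝ) < Real.sqrt S := Real.sqrt_pos.mpr hS
    rw [← Complex.ofReal_mul]
    congr 1
    rw [Real.rpow_neg hS.le, ← Real.sqrt_eq_rpow]
    field_simp
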